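/- Let G be a finite simple graph with n vertices, e edges, independence number β, minimum degree δ ≥ 1 and maximum degree Δ. If equality holds in M₁(G) = (n − β)Δ² + (e(δ + n − β))²/(4δ(n − β)β) and I is a maximum independent set, then G is bipartite with parts I and V \ I, and every vertex of V \ I has degree Δ. -/

import Mathlib

set_option maxHeartbeats 1000000

open Finset

theorem zagreb_equality_case
    {V : Type*} [Fintype V] [DecidableEq V] [Nonempty V]
    (G : SimpleGraph V) [DecidableRel G.Adj]
    (n e δ Δ β : ℕ) (hn : n = Fintype.card V) (he : e = G.edgeFinset.card)
    (hδ : δ = G.minDegree) (hδ1 : 1 ≤ δ) (hΔ : Δ = G.maxDegree)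
    (I : Finset V) (hI : ∀ u ∈ I, ∀ v ∈ I, ¬ G.Adj u v) (hIcard : I.card = β)
    (hβmax : ∀ J : Finset V, (∀ u ∈ J, ∀ v ∈ J, ¬ G.Adj u v) → J.card ≤ β)
    (heq : ((∑ v, (G.degree v) ^ 2 : ℕ) : ℝ) =
      ((n : ℝ) - β) * Δ ^ 2 +
        ((e : ℝ) * ((δ : ℝ) + n - β)) ^ 2 / (4 * δ * ((n : ℝ) - β) * β)) :
    (∀ u v, G.Adj u v → (u ∈ I ∧ v ∉ I) ∨ (u ∉ I ∧ v ∈ I)) ∧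
    (∀ v ∉ I, G.degree v = Δ) := by
  classical
  subst hn he hδ hΔ hIcard
  -- basic cardinality facts
  have hβ1 : 1 ≤ I.card := by
    obtain ⟨v⟩ := ‹Nonempty V›
    have h := hβmax {v} (by simp)
    simpa using h
  have hsub : ∀ v ∈ I, G.neighborFinset v ⊆ Iᶜ := by
    intro v hv w hw
    rw [SimpleGraph.mem_neighborFinset] at hw
    rw [Finset.mem_compl]
    intro hwI
    exact hI v hv w hwI hw
  have hdeg_le : ∀ v ∈ I, G.degree v ≤ Iᶜ.card := by
    intro v hv
    exact Finset.card_le_card (hsub v hv)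
  have hm1 : 1 ≤ Iᶜ.card := by
    obtain ⟨v₀, hv₀⟩ := Finset.card_pos.mp hβ1
    have hd : 1 ≤ G.degree v₀ := le_trans hδ1 (G.minDegree_le_degree v₀)
    rw [← SimpleGraph.card_neighborFinset_eq_degree] at hd
    obtain ⟨w, hw⟩ := Finset.card_pos.mp hd
    exact Finset.card_pos.mpr ⟨w, hsub v₀ hv₀ hw⟩
  have hcard : Fintype.card V = I.card + Iᶜ.card := (Finset.card_add_card_compl I).symm
  -- edge counting
  set S : ℕ := ∑ v ∈ I, G.degree v with hS
  set T : Finset ((_ : V) × V) := I.sigma (fun v => G.neighborFinset v) with hT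
  have hTcard : T.card = S := by
    rw [hT, Finset.card_sigma]
    rfl
  have hTmem : ∀ p : (_ : V) × V, p ∈ T ↔ p.1 ∈ I ∧ G.Adj p.1 p.2 := by
    intro p
    rw [hT, Finset.mem_sigma, SimpleGraph.mem_neighborFinset]
  have hinj : Set.InjOn (fun p : (_ : V) × V => s(p.1, p.2)) T := by
    rintro ⟨a, b⟩ hp ⟨c, d⟩ hq hpq
    rw [Finset.mem_coe, hTmem] at hp hq
    simp only [Sym2.eq_iff] at hpq
    rcases hpq with ⟨h1, h2⟩ | ⟨h1, h2⟩
    · subst h1; subst h2; rfl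
    · exact absurd hq.2 (by subst h1; subst h2; exact fun h => hI _ hp.1 _ hq.1 hp.2)
  have himgsub : T.image (fun p : (_ : V) × V => s(p.1, p.2)) ⊆ G.edgeFinset := by
    intro x hx
    rw [Finset.mem_image] at hx
    obtain ⟨p, hp, rfl⟩ := hx
    rw [SimpleGraph.mem_edgeFinset, SimpleGraph.mem_edgeSet]
    exact ((hTmem p).mp hp).2
  have hSle : S ≤ G.edgeFinset.card := by
    rw [← hTcard, ← Finset.card_image_of_injOn hinj]
    exact Finset.card_le_card himgsub
  -- real abbreviations
  set R : ℝ := (Iᶜ.card : ℝ) with hRdef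
  set b : ℝ := (I.card : ℝ) with hbdef
  have hRn : ((Fintype.card V : ℝ)) = b + R := by rw [hcard]; push_cast; ring
  rw [hRn] at heq
  have hb : (0:ℝ) < b := by rw [hbdef]; exact_mod_cast hβ1
  have hR : (0:ℝ) < R := by rw [hRdef]; exact_mod_cast hm1
  have hd : (0:ℝ) < (G.minDegree : ℝ) := by exact_mod_cast hδ1
  set d : ℝ := (G.minDegree : ℝ) with hddef
  set D : ℝ := (G.maxDegree : ℝ) with hDdef
  set E : ℝ := (G.edgeFinset.card : ℝ) with hEdef
  set s : ℝ := (S : ℝ) with hsdef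
  have hsE : s ≤ E := by rw [hsdef, hEdef]; exact_mod_cast hSle
  have hs0 : (0:ℝ) ≤ s := by positivity
  have hE0 : (0:ℝ) ≤ E := by positivity
  have hdR : (0:ℝ) < d + R := by linarith
  -- split the sum
  have hsplit : ((∑ v, (G.degree v) ^ 2 : ℕ) : ℝ)
      = (∑ v ∈ I, ((G.degree v : ℝ))^2) + (∑ v ∈ Iᶜ, ((G.degree v : ℝ))^2) := by
    push_cast
    rw [Finset.sum_add_sum_compl]
  set A : ℝ := ∑ v ∈ Iᶜ, ((G.degree v : ℝ))^2 with hAdef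
  set B : ℝ := ∑ v ∈ I, ((G.degree v : ℝ))^2 with hBdef
  have hA : A ≤ R * D^2 := by
    rw [hAdef]
    calc ∑ v ∈ Iᶜ, ((G.degree v : ℝ))^2 ≤ ∑ _v ∈ Iᶜ, D^2 := by
          apply Finset.sum_le_sum
          intro v _
          have h1 : (G.degree v : ℝ) ≤ D := by
            rw [hDdef]; exact_mod_cast G.degree_le_maxDegree v
          have h2 : (0:ℝ) ≤ (G.degree v : ℝ) := by positivity
          nlinarith
      _ = R * D^2 := by rw [Finset.sum_const, hRdef]; simp [mul_comm]
  have hsum_deg : (∑ v ∈ I, ((G.degree v : ℝ))) = s := by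
    rw [hsdef, hS]; push_cast; rfl
  have hB : B ≤ (d + R) * s - d * R * b := by
    have hstep : B ≤ ∑ v ∈ I, ((d + R) * (G.degree v : ℝ) - d * R) := by
      rw [hBdef]
      apply Finset.sum_le_sum
      intro v hv
      have h1 : d ≤ (G.degree v : ℝ) := by
        rw [hddef]; exact_mod_cast G.minDegree_le_degree v
      have h2 : (G.degree v : ℝ) ≤ R := by
        rw [hRdef]; exact_mod_cast hdeg_le v hv
      nlinarith
    calc B ≤ _ := hstep
      _ = (d + R) * s - d * R * b := by
          rw [Finset.sum_sub_distrib, ← Finset.mul_sum, hsum_deg, Finset.sum_const, hbdef]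
          push_cast
          ring
  have hden : (0:ℝ) < 4 * d * R * b :=
    mul_pos (mul_pos (mul_pos (by norm_num) hd) hR) hb
  have hC1 : (d + R) * s - d * R * b ≤ ((d + R) * s)^2 / (4 * d * R * b) := by
    rw [le_div_iff₀ hden]
    nlinarith [sq_nonneg ((d + R) * s - 2 * (d * R * b))]
  have hC2 : ((d + R) * s)^2 / (4 * d * R * b) ≤ (E * (d + R))^2 / (4 * d * R * b) := by
    apply div_le_div_of_nonneg_right _ hden.le
    have h1 : (d + R) * s ≤ E * (d + R) := by nlinarith [hsE, hdR.le]
    exact pow_le_pow_left₀ (mul_nonneg hdR.le hs0) h1 2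
  -- rewrite heq RHS
  have heq' : ((∑ v, (G.degree v) ^ 2 : ℕ) : ℝ)
      = R * D^2 + (E * (d + R))^2 / (4 * d * R * b) := by
    rw [heq]; ring_nf
  have hLHS : A + B = R * D^2 + (E * (d + R))^2 / (4 * d * R * b) := by
    rw [← heq', hsplit]; ring
  have keyA : A = R * D^2 := by
    have : B ≤ (E * (d + R))^2 / (4 * d * R * b) := le_trans hB (le_trans hC1 hC2)
    linarith
  have keyB : B = (E * (d + R))^2 / (4 * d * R * b) := by linarith
  have hX : ((d + R) * s)^2 / (4 * d * R * b) = (E * (d + R))^2 / (4 * d * R * b) :=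
    le_antisymm hC2 (by linarith)
  have hsEeq : s = E := by
    field_simp at hX
    exact (pow_left_inj₀ hs0 hE0 (by norm_num)).mp hX
  have hSe : S = G.edgeFinset.card := by
    rw [hsdef, hEdef] at hsEeq; exact_mod_cast hsEeq
  -- bipartite conclusion
  have himg : T.image (fun p : (_ : V) × V => s(p.1, p.2)) = G.edgeFinset := by
    apply Finset.eq_of_subset_of_card_le himgsub
    rw [Finset.card_image_of_injOn hinj, hTcard, hSe]
  constructor
  · intro u v huv
    have hmem : s(u, v) ∈ T.image (fun p : (_ : V) × V => s(p.1, p.2)) := by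
      rw [himg, SimpleGraph.mem_edgeFinset, SimpleGraph.mem_edgeSet]; exact huv
    rw [Finset.mem_image] at hmem
    obtain ⟨p, hp, hpeq⟩ := hmem
    rw [hTmem] at hp
    simp only [Sym2.eq_iff] at hpeq
    rcases hpeq with ⟨h1, h2⟩ | ⟨h1, h2⟩
    · left
      refine ⟨h1 ▸ hp.1, fun hv => ?_⟩
      exact hI u (h1 ▸ hp.1) v hv huv
    · right
      refine ⟨fun hu => ?_, h1 ▸ hp.1⟩
      exact hI v (h1 ▸ hp.1) u hu huv.symm
  · -- degrees outside I are all Δ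
    intro v hv
    have hvc : v ∈ Iᶜ := Finset.mem_compl.mpr hv
    have hAeq : ∑ v ∈ Iᶜ, ((G.degree v : ℝ))^2 = ∑ _v ∈ Iᶜ, D^2 := by
      rw [← hAdef, keyA, Finset.sum_const, hRdef]; simp [mul_comm]
    have hle : ∀ w ∈ Iᶜ, ((G.degree w : ℝ))^2 ≤ D^2 := by
      intro w _
      have h1 : (G.degree w : ℝ) ≤ D := by
        rw [hDdef]; exact_mod_cast G.degree_le_maxDegree w
      have h2 : (0:ℝ) ≤ (G.degree w : ℝ) := by positivity
      nlinarith
    have heach := (Finset.sum_eq_sum_iff_of_le hle).mp hAeq v hvc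
    have hD0 : (0:ℝ) ≤ D := by rw [hDdef]; positivity
    have hdeg0 : (0:ℝ) ≤ (G.degree v : ℝ) := by positivity
    rw [hDdef] at heach
    have hnat : G.degree v ^ 2 = G.maxDegree ^ 2 := by exact_mod_cast heach
    exact Nat.pow_left_injective (by norm_num) hnat
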